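/- Let the set of zones be 𝒵 = {1, 2}, and suppose zone 2 cannot cover its own demand: S_2 ≤ D_2. Assume the surplus of zone 1 strictly exceeds the deficit of zone 2, i.e. S_1 − D_1 > D_2 − S_2, that the deficit is strictly below zone 1's export limit, i.e. D_2 − S_2 < E_1, and moreover E_2 > 0, C_1 ≤ D_1 and C_2 < S_2. Then there exists a strictly feasible (Slater) point: a family x = (x^z_{n,k}) with 0 < x^z_{n,k} < 1 for all n, k, z such that the demand, capacity, export and core constraints all hold strictly (demand and core with strict '>', capacity and export with strict '<'). (Lemma 1, condition (ii): Slater's constraint qualification when one zone's deficit is covered by imports.) -/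

import Mathlib

/-- Auxiliary allocation pattern for two zones. -/
def slaterF (a b c d : ℝ) : Fin 2 → Fin 2 → ℝ :=
  fun i z => if i = 0 then (if z = 0 then a else b) else (if z = 0 then c else d)

@[simp] lemma slaterF00 (a b c d : ℝ) : slaterF a b c d 0 0 = a := rfl
@[simp] lemma slaterF01 (a b c d : ℝ) : slaterF a b c d 0 1 = b := rfl
@[simp] lemma slaterF10 (a b c d : ℝ) : slaterF a b c d 1 0 = c := rfl
@[simp] lemma slaterF11 (a b c d : ℝ) : slaterF a b c d 1 1 = d := rfl

lemma fin2_cases (i : Fin 2) : i = 0 ∨ i = 1 := by omega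

/-- Lemma 1, condition (ii): Slater's constraint qualification for two zones
`𝒵 = {1,2}` when zone 2 cannot cover its own demand (`S₂ ≤ D₂`) but the
surplus of zone 1 strictly exceeds the deficit of zone 2, the deficit is
strictly below zone 1's export limit, `E₂ > 0`, `C₁ ≤ D₁` and `C₂ < S₂`:
there is a strictly feasible point for the market operator's constraints. -/
theorem slater_condition_ii
    {N : Type*} [Fintype N]
    (zone : N → Fin 2) (K : N → ℕ)
    (Δ : (n : N) → Fin (K n) → ℝ)
    (D E C : Fin 2 → ℝ)
    (hΔ : ∀ n k, 0 ≤ Δ n k)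
    (hD : ∀ z, 0 ≤ D z) (hE : ∀ z, 0 ≤ E z) (hC : ∀ z, 0 ≤ C z)
    -- zone 2 cannot cover its own demand : S₂ ≤ D₂
    (hS2 : ∑ n ∈ Finset.univ.filter (fun n => zone n = 1), ∑ k, Δ n k ≤ D 1)
    -- surplus of zone 1 strictly exceeds the deficit of zone 2 : S₁ - D₁ > D₂ - S₂
    (hsurplus :
      D 1 - ∑ n ∈ Finset.univ.filter (fun n => zone n = 1), ∑ k, Δ n k <
        (∑ n ∈ Finset.univ.filter (fun n => zone n = 0), ∑ k, Δ n k) - D 0)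
    -- the deficit is strictly below zone 1's export limit : D₂ - S₂ < E₁
    (hexp : D 1 - ∑ n ∈ Finset.univ.filter (fun n => zone n = 1), ∑ k, Δ n k < E 0)
    (hE2 : 0 < E 1)
    (hC1 : C 0 ≤ D 0)
    (hC2 : C 1 < ∑ n ∈ Finset.univ.filter (fun n => zone n = 1), ∑ k, Δ n k) :
    ∃ x : (n : N) → Fin (K n) → Fin 2 → ℝ,
      (∀ n k z, 0 < x n k z ∧ x n k z < 1) ∧
      -- strict demand
      (∀ z, D z < ∑ n, ∑ k, x n k z * Δ n k) ∧
      -- strict capacity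
      (∀ n, ∀ k : Fin (K n), ∑ z, x n k z < 1) ∧
      -- strict export
      (∀ z, ∑ n ∈ Finset.univ.filter (fun n => zone n = z),
          ∑ k, ∑ z' ∈ Finset.univ.filter (fun z' => z' ≠ z), x n k z' * Δ n k < E z) ∧
      -- strict core
      (∀ z, C z < ∑ n ∈ Finset.univ.filter (fun n => zone n = z),
          ∑ k, x n k z * Δ n k) := by
  classical
  set S0 := ∑ n ∈ Finset.univ.filter (fun n => zone n = 0), ∑ k, Δ n k with hS0def
  set S1 := ∑ n ∈ Finset.univ.filter (fun n => zone n = 1), ∑ k, Δ n k with hS1def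
  have hS1pos : 0 < S1 := lt_of_le_of_lt (hC 1) hC2
  have hdnn : 0 ≤ D 1 - S1 := by linarith
  have hS0pos : 0 < S0 := by have := hD 0; linarith
  set d : ℝ := D 1 - S1 with hd
  set M : ℝ := S0 - D 0 - d with hM
  have hMpos : 0 < M := by rw [hM, hd]; linarith
  have hEd : 0 < E 0 - d := by rw [hd]; linarith
  set t : ℝ := min (M/4) ((E 0 - d)/2) with ht
  have htpos : 0 < t := lt_min (by linarith) (by linarith)
  have htM : t ≤ M/4 := min_le_left _ _
  have htE : t ≤ (E 0 - d)/2 := min_le_right _ _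
  set ε : ℝ := min (t/(2*S1)) (min (1/2) ((S1 - C 1)/(2*S1))) with hε
  have hεpos : 0 < ε := by
    apply lt_min (by positivity)
    exact lt_min (by norm_num) (by apply div_pos <;> linarith)
  have hεt : ε * S1 ≤ t/2 := by
    have h1 : ε ≤ t/(2*S1) := min_le_left _ _
    have h2 := mul_le_mul_of_nonneg_right h1 hS1pos.le
    calc ε * S1 ≤ t/(2*S1) * S1 := h2
      _ = t/2 := by field_simp
  have hεhalf : ε ≤ 1/2 := le_trans (min_le_right _ _) (min_le_left _ _)
  have hεC : ε * S1 ≤ (S1 - C 1)/2 := by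
    have h1 : ε ≤ (S1 - C 1)/(2*S1) := le_trans (min_le_right _ _) (min_le_right _ _)
    have h2 := mul_le_mul_of_nonneg_right h1 hS1pos.le
    calc ε * S1 ≤ (S1 - C 1)/(2*S1) * S1 := h2
      _ = (S1 - C 1)/2 := by field_simp
  set γ : ℝ := min ε (E 1 / S1) / 2 with hγ
  have hγpos : 0 < γ := by
    apply div_pos _ (by norm_num)
    exact lt_min hεpos (div_pos hE2 hS1pos)
  have hγε : γ < ε := by
    have h1 : min ε (E 1 / S1) ≤ ε := min_le_left _ _
    rw [hγ]; linarith
  have hγE : γ * S1 < E 1 := by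
    have h1 : γ ≤ (E 1 / S1) / 2 := by
      have := min_le_right ε (E 1 / S1); rw [hγ]; linarith
    have h2 := mul_le_mul_of_nonneg_right h1 hS1pos.le
    have h3 : (E 1 / S1) / 2 * S1 = E 1 / 2 := by field_simp
    rw [h3] at h2; linarith
  set α : ℝ := (D 0 + t)/S0 with hα
  set β : ℝ := (d + t)/S0 with hβ
  set δ : ℝ := 1 - ε with hδ
  have hαS : α * S0 = D 0 + t := by rw [hα]; field_simp
  have hβS : β * S0 = d + t := by rw [hβ]; field_simp
  have hαpos : 0 < α := div_pos (by have := hD 0; linarith) hS0pos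
  have hβpos : 0 < β := div_pos (by linarith) hS0pos
  have hαβ : α + β < 1 := by
    have h : α + β = (D 0 + d + 2*t)/S0 := by rw [hα, hβ, ← add_div]; ring_nf
    rw [h, div_lt_one hS0pos]
    rw [hM] at hMpos; linarith
  have hα1 : α < 1 := by linarith
  have hβ1 : β < 1 := by linarith
  have hδpos : 0 < δ := by rw [hδ]; linarith
  have hδ1 : δ < 1 := by rw [hδ]; linarith
  have hγ1 : γ < 1 := by linarith
  have hγδ : γ + δ < 1 := by rw [hδ]; linarith
  have hδS : δ * S1 = S1 - ε * S1 := by rw [hδ]; ring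
  have h0 : ∀ z, ∑ n ∈ Finset.univ.filter (fun n => zone n = 0),
      ∑ k, slaterF α β γ δ (zone n) z * Δ n k = slaterF α β γ δ 0 z * S0 := by
    intro z
    rw [hS0def, Finset.mul_sum]
    apply Finset.sum_congr rfl
    intro n hn
    rw [Finset.mem_filter] at hn
    rw [hn.2, ← Finset.mul_sum]
  have h1 : ∀ z, ∑ n ∈ Finset.univ.filter (fun n => zone n = 1),
      ∑ k, slaterF α β γ δ (zone n) z * Δ n k = slaterF α β γ δ 1 z * S1 := by
    intro z
    rw [hS1def, Finset.mul_sum]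
    apply Finset.sum_congr rfl
    intro n hn
    rw [Finset.mem_filter] at hn
    rw [hn.2, ← Finset.mul_sum]
  refine ⟨fun n _ z => slaterF α β γ δ (zone n) z, ?_, ?_, ?_, ?_, ?_⟩
  · intro n k z
    rcases fin2_cases z with hz | hz <;> subst hz <;>
        rcases fin2_cases (zone n) with h | h <;>
      simp only [h, slaterF00, slaterF01, slaterF10, slaterF11] <;>
      exact ⟨by assumption, by assumption⟩
  · -- demand
    have hne : ∀ i : Fin 2, (¬ i = 0) ↔ i = 1 := by decide
    have hsplit : ∀ g : N → ℝ, ∑ n, g n =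
        (∑ n ∈ Finset.univ.filter (fun n => zone n = 0), g n) +
        ∑ n ∈ Finset.univ.filter (fun n => zone n = 1), g n := by
      intro g
      rw [← Finset.sum_filter_add_sum_filter_not Finset.univ (fun n => zone n = 0)]
      congr 1
      apply Finset.sum_congr _ (fun _ _ => rfl)
      ext n; simp [hne]
    intro z
    rw [hsplit, h0, h1]
    rcases fin2_cases z with hz | hz <;> rw [hz] <;> simp only [slaterF00, slaterF01,
      slaterF10, slaterF11]
    · rw [hαS]
      have hgs : 0 < γ * S1 := mul_pos hγpos hS1pos
      linarith
    · rw [hβS, hδS, hd]; linarith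
  · -- capacity
    intro n k
    rw [Fin.sum_univ_two]
    rcases fin2_cases (zone n) with h | h <;>
      simp only [h, slaterF00, slaterF01, slaterF10, slaterF11] <;> linarith
  · -- export
    have hfil0 : (Finset.univ.filter (fun z' : Fin 2 => z' ≠ 0)) = {1} := by decide
    have hfil1 : (Finset.univ.filter (fun z' : Fin 2 => z' ≠ 1)) = {0} := by decide
    intro z
    rcases fin2_cases z with hz | hz <;> rw [hz]
    · have hinner : ∀ n : N, ∀ k, ∑ z' ∈ Finset.univ.filter (fun z' => z' ≠ (0:Fin 2)),
          slaterF α β γ δ (zone n) z' * Δ n k = slaterF α β γ δ (zone n) 1 * Δ n k := by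
        intro n k; rw [hfil0, Finset.sum_singleton]
      calc ∑ n ∈ Finset.univ.filter (fun n => zone n = 0),
            ∑ k, ∑ z' ∈ Finset.univ.filter (fun z' => z' ≠ (0:Fin 2)),
              slaterF α β γ δ (zone n) z' * Δ n k
          = ∑ n ∈ Finset.univ.filter (fun n => zone n = 0),
              ∑ k, slaterF α β γ δ (zone n) 1 * Δ n k := by
            apply Finset.sum_congr rfl
            intro n _
            exact Finset.sum_congr rfl (fun k _ => hinner n k)
        _ = slaterF α β γ δ 0 1 * S0 := h0 1
        _ = d + t := by rw [slaterF01, hβS]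
        _ < E 0 := by linarith
    · have hinner : ∀ n : N, ∀ k, ∑ z' ∈ Finset.univ.filter (fun z' => z' ≠ (1:Fin 2)),
          slaterF α β γ δ (zone n) z' * Δ n k = slaterF α β γ δ (zone n) 0 * Δ n k := by
        intro n k; rw [hfil1, Finset.sum_singleton]
      calc ∑ n ∈ Finset.univ.filter (fun n => zone n = 1),
            ∑ k, ∑ z' ∈ Finset.univ.filter (fun z' => z' ≠ (1:Fin 2)),
              slaterF α β γ δ (zone n) z' * Δ n k
          = ∑ n ∈ Finset.univ.filter (fun n => zone n = 1),
              ∑ k, slaterF α β γ δ (zone n) 0 * Δ n k := by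
            apply Finset.sum_congr rfl
            intro n _
            exact Finset.sum_congr rfl (fun k _ => hinner n k)
        _ = slaterF α β γ δ 1 0 * S1 := h1 0
        _ = γ * S1 := by rw [slaterF10]
        _ < E 1 := hγE
  · -- core
    intro z
    rcases fin2_cases z with hz | hz <;> rw [hz]
    · rw [h0 0, slaterF00, hαS]; linarith
    · rw [h1 1, slaterF11, hδS]; linarith
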